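/- Let d ≥ 3 and F ∈ ℂ[x,y]_d with rk(F) ≤ ⌊(d+1)/2⌋, and suppose F is not a d-th power of a linear form. Then F has at least three pairwise distinct roots in ℙ^1, i.e., F is divisible by three pairwise non-proportional linear forms. -/

import Mathlib

open MvPolynomial

noncomputable def lin (c : ℂ × ℂ) : MvPolynomial (Fin 2) ℂ :=
  C c.1 * X 0 + C c.2 * X 1

lemma eval_lin (v : Fin 2 → ℂ) (c : ℂ × ℂ) : eval v (lin c) = c.1 * v 0 + c.2 * v 1 := by
  simp [lin]

lemma eval_lin' (s t : ℂ) (c : ℂ × ℂ) :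
    eval (fun i : Fin 2 => if i = 0 then s else t) (lin c) = c.1 * s + c.2 * t := by
  simp [lin]

lemma myfunext {F G : MvPolynomial (Fin 2) ℂ}
    (h : ∀ s t : ℂ, eval (fun i => if i = 0 then s else t) F = eval (fun i => if i = 0 then s else t) G) : F = G := by
  apply MvPolynomial.funext
  intro x
  have hx : x = (fun i => if i = 0 then x 0 else x 1) := by
    funext i; fin_cases i <;> simp
  rw [hx]; exact h (x 0) (x 1)

lemma homog_eval_scale {F : MvPolynomial (Fin 2) ℂ} {d : ℕ} (hF : F.IsHomogeneous d)
    (c : ℂ) (v : Fin 2 → ℂ) : eval (fun i => c * v i) F = c ^ d * eval v F := by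
  conv_lhs => rw [← F.support_sum_monomial_coeff]
  conv_rhs => rw [← F.support_sum_monomial_coeff]
  rw [map_sum, map_sum, Finset.mul_sum]
  apply Finset.sum_congr rfl
  intro m hm
  rw [eval_monomial, eval_monomial]
  have hdeg : ∑ i ∈ m.support, m i = d := by
    have := hF (Finsupp.mem_support_iff.mp hm)
    rw [← this]
    simp [Finsupp.weight_apply, Finsupp.sum]
  rw [← hdeg]
  rw [Finsupp.prod, Finsupp.prod]
  simp_rw [mul_pow]
  rw [Finset.prod_mul_distrib, Finset.prod_pow_eq_pow_sum]
  ring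

section SC
open Polynomial Finset

lemma pair_eval {r : ℕ} (q : Polynomial ℂ) (hdeg : q.natDegree ≤ r) (x y : ℂ) (hy : y ≠ 0) :
    ∑ j ∈ range (r+1), q.coeff j * x ^ j * y ^ (r - j) = y ^ r * q.eval (x / y) := by
  rw [eval_eq_sum_range' (Nat.lt_succ_of_le hdeg), Finset.mul_sum]
  apply Finset.sum_congr rfl
  intro j hj
  rw [Finset.mem_range] at hj
  have hj' : j ≤ r := Nat.lt_succ_iff.mp hj
  have h1 : y ^ (r - j) * y ^ j = y ^ r := pow_sub_mul_pow y hj'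
  rw [div_pow, ← h1]
  have hyj : y ^ j ≠ 0 := pow_ne_zero _ hy
  simp only [mul_div_assoc']
  rw [eq_div_iff hyj]
  ring

lemma factor_coeff_one (a b : ℂ) : (Polynomial.C b * Polynomial.X + Polynomial.C (-a)).coeff 1 = b := by
  simp

lemma factor_ne_zero {a b : ℂ} (hb : b ≠ 0) : (Polynomial.C b * Polynomial.X + Polynomial.C (-a)) ≠ 0 := fun h => by
  have := factor_coeff_one a b; rw [h] at this; simp at this; exact hb this.symm

lemma SC {d r b : ℕ} (hb : 1 ≤ b) (hbd : b + r ≤ d) (α A B : Fin r → ℂ)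
    (h0 : ∀ x y : ℕ, x + y = d → y ≠ b → ∑ i, α i * A i ^ x * B i ^ y = 0)
    (hbne : ∑ i, α i * A i ^ (d - b) * B i ^ b ≠ 0) : False := by
  have hr : 0 < r := by
    rcases Nat.eq_zero_or_pos r with h | h
    · subst h; simp at hbne
    · exact h
  -- key pairing lemma
  have key : ∀ q : Polynomial ℂ,
      (∀ i, ∑ j ∈ range (r+1), q.coeff j * A i ^ j * B i ^ (r - j) = 0) →
      ∀ m, m ≤ r → r ≤ m + b → q.coeff m = 0 := by
    intro q hq m hm hmb
    set t := m + b - r with ht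
    have h2 : ∑ i, α i * A i ^ (d - r - t) * B i ^ t *
        (∑ j ∈ range (r+1), q.coeff j * A i ^ j * B i ^ (r - j)) = 0 := by
      apply Finset.sum_eq_zero; intro i _; rw [hq i, mul_zero]
    have h3 : ∑ i, α i * A i ^ (d - r - t) * B i ^ t *
        (∑ j ∈ range (r+1), q.coeff j * A i ^ j * B i ^ (r - j)) =
        ∑ j ∈ range (r+1), q.coeff j *
          (∑ i, α i * A i ^ ((d - r - t) + j) * B i ^ (t + (r - j))) := by
      simp_rw [Finset.mul_sum, Finset.sum_comm (s := Finset.univ)]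
      apply Finset.sum_congr rfl; intro j _
      apply Finset.sum_congr rfl; intro i _
      rw [pow_add, pow_add]; ring
    rw [h3] at h2
    have htb : t ≤ b := by omega
    have h4 : ∑ j ∈ range (r+1), q.coeff j *
        (∑ i, α i * A i ^ ((d - r - t) + j) * B i ^ (t + (r - j))) =
        q.coeff m * (∑ i, α i * A i ^ (d - b) * B i ^ b) := by
      rw [Finset.sum_eq_single m]
      · have e1 : d - r - t + m = d - b := by omega
        have e2 : t + (r - m) = b := by omega
        rw [e1, e2]
      · intro j hj hjm
        rw [Finset.mem_range] at hj
        rw [h0 ((d - r - t) + j) (t + (r - j)) (by omega) (by omega), mul_zero]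
      · intro h; exact absurd (Finset.mem_range.mpr (by omega)) h
    rw [h4] at h2
    exact (mul_eq_zero.mp h2).resolve_right hbne
  classical
  set T : Finset (Fin r) := Finset.univ.filter (fun i => B i ≠ 0) with hT
  by_cases hTu : T = Finset.univ
  · -- all B i ≠ 0
    have hBi : ∀ i, B i ≠ 0 := by
      intro i
      have : i ∈ T := hTu ▸ Finset.mem_univ i
      exact (Finset.mem_filter.mp this).2
    set q : Polynomial ℂ := ∏ i, (Polynomial.C (B i) * Polynomial.X + Polynomial.C (-A i)) with hq
    have hfne : ∀ i : Fin r, (Polynomial.C (B i) * Polynomial.X + Polynomial.C (-A i)) ≠ 0 :=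
      fun i => factor_ne_zero (hBi i)
    have hdeg : q.natDegree = r := by
      rw [hq, natDegree_prod _ _ (fun i _ => hfne i)]
      rw [Finset.sum_congr rfl (fun i _ => natDegree_linear (hBi i))]
      simp
    have hlead : q.coeff r ≠ 0 := by
      rw [← hdeg, ← leadingCoeff]
      rw [hq, leadingCoeff_prod]
      simp only [leadingCoeff_linear (hBi _)]
      exact Finset.prod_ne_zero_iff.mpr (fun i _ => hBi i)
    refine hlead (key q ?_ r le_rfl (by omega))
    intro i
    rw [pair_eval q hdeg.le (A i) (B i) (hBi i)]
    rw [hq, Polynomial.eval_prod]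
    rw [Finset.prod_eq_zero (Finset.mem_univ i)]
    · ring
    · simp only [Polynomial.eval_add, Polynomial.eval_mul, Polynomial.eval_C, Polynomial.eval_X]
      field_simp
      rw [div_self (hBi i)]; ring
  · -- some B i = 0
    have hTcard : T.card < r := by
      have := Finset.card_lt_card (Finset.ssubset_univ_iff.mpr hTu)
      simpa using this
    set q : Polynomial ℂ := Polynomial.X ^ (r - 1 - T.card) * ∏ i ∈ T, (Polynomial.C (B i) * Polynomial.X + Polynomial.C (-A i)) with hq
    have hBiT : ∀ i ∈ T, B i ≠ 0 := fun i hi => (Finset.mem_filter.mp hi).2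
    have hprodne : (∏ i ∈ T, (Polynomial.C (B i) * Polynomial.X + Polynomial.C (-A i))) ≠ 0 :=
      Finset.prod_ne_zero_iff.mpr (fun i hi => factor_ne_zero (hBiT i hi))
    have hdeg : q.natDegree = r - 1 := by
      rw [hq, natDegree_mul (pow_ne_zero _ Polynomial.X_ne_zero) hprodne, Polynomial.natDegree_X_pow,
        natDegree_prod _ _ (fun i hi => factor_ne_zero (hBiT i hi))]
      have : ∑ i ∈ T, (Polynomial.C (B i) * Polynomial.X + Polynomial.C (-A i)).natDegree = T.card := by
        rw [Finset.sum_congr rfl (fun i hi => natDegree_linear (hBiT i hi))]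
        simp [mul_comm]
      omega
    have hcr : q.coeff r = 0 := coeff_eq_zero_of_natDegree_lt (by omega)
    have hlead : q.coeff (r - 1) ≠ 0 := by
      rw [← hdeg, ← leadingCoeff, hq, leadingCoeff_mul, Polynomial.leadingCoeff_X_pow, one_mul,
        leadingCoeff_prod]
      rw [Finset.prod_congr rfl (fun i hi => leadingCoeff_linear (hBiT i hi))]
      exact Finset.prod_ne_zero_iff.mpr hBiT
    refine hlead (key q ?_ (r - 1) (by omega) (by omega))
    intro i
    by_cases hiT : i ∈ T
    · rw [pair_eval q (by omega) (A i) (B i) (hBiT i hiT)]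
      rw [hq, Polynomial.eval_mul, Polynomial.eval_prod]
      rw [Finset.prod_eq_zero hiT]
      · ring
      · simp only [Polynomial.eval_add, Polynomial.eval_mul, Polynomial.eval_C, Polynomial.eval_X]
        field_simp
        rw [div_self (hBiT i hiT)]; ring
    · have hBi0 : B i = 0 := by
        by_contra h
        exact hiT (Finset.mem_filter.mpr ⟨Finset.mem_univ i, h⟩)
      apply Finset.sum_eq_zero
      intro j hj
      rw [Finset.mem_range] at hj
      rcases Nat.lt_or_ge j r with h | h
      · rw [hBi0, zero_pow (by omega)]; ring
      · have : j = r := by omega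
        subst this
        rw [hcr]; ring

end SC

section COEFF
open Finset

lemma coeff_term (a : ℂ) (j l x y : ℕ) :
    coeff (Finsupp.single 0 x + Finsupp.single 1 y)
      ((C a) * (X (0:Fin 2))^j * (X (1:Fin 2))^l : MvPolynomial (Fin 2) ℂ)
    = if j = x ∧ l = y then a else 0 := by
  rw [X_pow_eq_monomial, X_pow_eq_monomial, C_apply, monomial_mul, monomial_mul, coeff_monomial]
  have hiff : (0 + Finsupp.single (0:Fin 2) j + Finsupp.single 1 l
      = Finsupp.single 0 x + Finsupp.single 1 y) ↔ (j = x ∧ l = y) := by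
    constructor
    · intro h
      constructor
      · have := DFunLike.congr_fun h 0
        simpa using this
      · have := DFunLike.congr_fun h 1
        simpa using this
    · rintro ⟨rfl, rfl⟩
      rw [zero_add]
  by_cases h : j = x ∧ l = y
  · rw [if_pos (hiff.mpr h), if_pos h, mul_one, mul_one]
  · rw [if_neg (fun hc => h (hiff.mp hc)), if_neg h]

lemma lin_pow_expand (c : ℂ × ℂ) (d : ℕ) :
    lin c ^ d = ∑ j ∈ range (d+1),
      C (c.1^j * c.2^(d-j) * d.choose j) * (X (0:Fin 2))^j * (X (1:Fin 2))^(d-j) := by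
  rw [lin, add_pow]
  apply Finset.sum_congr rfl
  intro j hj
  have : ((d.choose j : ℕ) : MvPolynomial (Fin 2) ℂ) = C ((d.choose j : ℕ) : ℂ) := by
    simp
  rw [mul_pow, mul_pow, ← C_pow, ← C_pow, this]
  rw [map_mul, map_mul]
  ring

lemma coeff_lin_pow (c : ℂ × ℂ) (d x y : ℕ) (hxy : x + y = d) :
    coeff (Finsupp.single 0 x + Finsupp.single 1 y) (lin c ^ d)
    = d.choose x * c.1^x * c.2^y := by
  rw [lin_pow_expand]
  rw [show coeff (Finsupp.single 0 x + Finsupp.single 1 y)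
      (∑ j ∈ range (d+1), C (c.1^j * c.2^(d-j) * d.choose j) * (X (0:Fin 2))^j * (X (1:Fin 2))^(d-j))
    = ∑ j ∈ range (d+1), coeff (Finsupp.single 0 x + Finsupp.single 1 y)
      (C (c.1^j * c.2^(d-j) * d.choose j) * (X (0:Fin 2))^j * (X (1:Fin 2))^(d-j)) from
    map_sum (coeffAddMonoidHom _) _ _]
  rw [Finset.sum_congr rfl (fun j _ => coeff_term _ j (d-j) x y)]
  rw [Finset.sum_eq_single x]
  · have hdx : d - x = y := by omega
    rw [if_pos ⟨rfl, hdx⟩, hdx]; ring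
  · intro j hj hjx
    rw [if_neg (fun hc => hjx hc.1)]
  · intro h
    exact absurd (Finset.mem_range.mpr (by omega)) h

end COEFF

section ROU
open Finset Complex

lemma geom_zero {n : ℕ} (hn : 0 < n) (ω : ℂ) (hprim : IsPrimitiveRoot ω n)
    {e : ℕ} (he1 : 1 ≤ e) (he2 : e < 2 * n) (hen : e ≠ n) :
    ∑ j ∈ range n, (ω ^ e) ^ j = 0 := by
  have hg1 : ω ^ e ≠ 1 := by
    intro h
    rw [hprim.pow_eq_one_iff_dvd] at h
    obtain ⟨m, hm⟩ := h
    rcases m with _ | m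
    · omega
    rcases m with _ | m
    · omega
    · have : n * 2 ≤ n * (m + 1 + 1) := Nat.mul_le_mul_left _ (by omega)
      omega
  rw [geom_sum_eq hg1]
  have : (ω ^ e) ^ n = 1 := by
    rw [← pow_mul, mul_comm, pow_mul, hprim.pow_eq_one, one_pow]
  rw [this, sub_self, zero_div]

lemma scalar_identity (d a b : ℕ) (hab : a + b = d) (ω : ℂ)
    (hprim : IsPrimitiveRoot ω (d + 1)) (s t : ℂ) :
    ∑ j ∈ range (d+1), ω ^ (j * (d+1-b)) * (s + ω^j * t)^d
      = ((d:ℂ)+1) * (d.choose b) * s^a * t^b := by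
  have hb : b ≤ d := by omega
  have expand : ∀ j : ℕ, ω ^ (j * (d+1-b)) * (s + ω^j * t)^d
      = ∑ k ∈ range (d+1), (ω ^ (2*d+1-b-k))^j * (s^k * t^(d-k) * d.choose k) := by
    intro j
    rw [add_pow, Finset.mul_sum]
    apply Finset.sum_congr rfl
    intro k hk
    rw [Finset.mem_range] at hk
    have hk' : k ≤ d := by omega
    rw [mul_pow, ← pow_mul ω j (d-k)]
    have h1 : ω ^ (j * (d+1-b)) * (s ^ k * (ω ^ (j * (d-k)) * t ^ (d-k)) * (d.choose k : ℂ))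
        = (ω ^ (j * (d+1-b)) * ω ^ (j * (d-k))) * (s^k * t^(d-k) * d.choose k) := by ring
    rw [h1, ← pow_add]
    have h2 : j * (d+1-b) + j * (d-k) = (2*d+1-b-k) * j := by
      rw [← Nat.mul_add]
      have : (d+1-b) + (d-k) = 2*d+1-b-k := by omega
      rw [this, Nat.mul_comm]
    rw [h2, pow_mul]
  rw [Finset.sum_congr rfl (fun j _ => expand j), Finset.sum_comm]
  rw [Finset.sum_eq_single a]
  · have he : 2*d+1-b-a = d+1 := by omega
    rw [he]
    simp only [hprim.pow_eq_one, one_pow, one_mul]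
    rw [Finset.sum_const, card_range, nsmul_eq_mul]
    have hda : d - a = b := by omega
    have hca : d.choose a = d.choose b := by
      rw [show a = d - b by omega, Nat.choose_symm hb]
    rw [hda, hca]
    push_cast
    ring
  · intro k hk hka
    rw [Finset.mem_range] at hk
    rw [← Finset.sum_mul, geom_zero (by omega) ω hprim (by omega) (by omega) (by omega), zero_mul]
  · intro h
    exact absurd (Finset.mem_range.mpr (by omega)) h

end ROU

section DECOMP
open Finset MvPolynomial

lemma waring_decomp (d a b : ℕ) (hab : a + b = d) (hd : 0 < d) (u : ℂ) (g1 g2 : ℂ × ℂ) :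
    ∃ (α : Fin (d+1) → ℂ) (γ : Fin (d+1) → ℂ × ℂ),
      C u * lin g1 ^ a * lin g2 ^ b = ∑ i, C (α i) * lin (γ i) ^ d := by
  obtain ⟨ω, hprim⟩ : ∃ ω : ℂ, IsPrimitiveRoot ω (d+1) :=
    ⟨_, Complex.isPrimitiveRoot_exp (d+1) (by omega)⟩
  have hNe : ((d:ℂ)+1) * (d.choose b : ℂ) ≠ 0 := by
    have h1 : ((d:ℂ)+1) ≠ 0 := by
      norm_cast
    have h2 : (d.choose b : ℂ) ≠ 0 := by
      exact_mod_cast Nat.cast_ne_zero.mpr (Nat.choose_pos (show b ≤ d by omega)).ne'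
    exact mul_ne_zero h1 h2
  refine ⟨fun i => u * ω ^ ((i:ℕ) * (d+1-b)) / (((d:ℂ)+1) * (d.choose b)),
      fun i => (g1.1 + ω^(i:ℕ) * g2.1, g1.2 + ω^(i:ℕ) * g2.2), ?_⟩
  apply myfunext
  intro sv tv
  rw [map_sum]
  simp only [map_mul, map_pow, eval_C, eval_lin']
  set s := g1.1 * sv + g1.2 * tv with hs
  set t := g2.1 * sv + g2.2 * tv with ht
  have hterm : ∀ i : Fin (d+1),
      u * ω ^ ((i:ℕ) * (d+1-b)) / (((d:ℂ)+1) * (d.choose b)) *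
        ((g1.1 + ω^(i:ℕ) * g2.1) * sv + (g1.2 + ω^(i:ℕ) * g2.2) * tv) ^ d
      = (u / (((d:ℂ)+1) * (d.choose b))) * (ω ^ ((i:ℕ) * (d+1-b)) * (s + ω^(i:ℕ) * t) ^ d) := by
    intro i
    have : (g1.1 + ω^(i:ℕ) * g2.1) * sv + (g1.2 + ω^(i:ℕ) * g2.2) * tv = s + ω^(i:ℕ) * t := by
      rw [hs, ht]; ring
    rw [this]; ring
  rw [Finset.sum_congr rfl (fun i _ => hterm i), ← Finset.mul_sum]
  rw [Fin.sum_univ_eq_sum_range (fun j => ω ^ (j * (d+1-b)) * (s + ω^j * t) ^ d) (d+1)]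
  rw [scalar_identity d a b hab ω hprim s t]
  field_simp
  ring
  exact (mul_inv_cancel_right₀ (by exact_mod_cast (Nat.choose_pos (show b ≤ d by omega)).ne') _).symm

end DECOMP

section FACTOR
open MvPolynomial Finset

lemma binary_factor {d : ℕ} (hd : 0 < d) {F : MvPolynomial (Fin 2) ℂ}
    (hF : F.IsHomogeneous d) (hF0 : F ≠ 0) :
    ∃ (u : ℂ) (rs : Multiset ℂ), u ≠ 0 ∧ rs.card ≤ d ∧
      F = C u * (rs.map (fun r => lin (1, -r))).prod * lin (0,1) ^ (d - rs.card) := by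
  classical
  have mdeg : ∀ m ∈ F.support, m 0 + m 1 = d := by
    intro m hm
    have hdeg : ∑ i ∈ m.support, m i = d := by
      have := hF (Finsupp.mem_support_iff.mp hm)
      rw [← this]
      simp [Finsupp.weight_apply, Finsupp.sum]
    have h2 : ∑ i ∈ m.support, m i = ∑ i : Fin 2, m i :=
      Finset.sum_subset (Finset.subset_univ _)
        (fun i _ hi => Finsupp.notMem_support_iff.mp hi)
    rw [← hdeg, h2, Fin.sum_univ_two]
  set p : Polynomial ℂ := ∑ m ∈ F.support, Polynomial.C (coeff m F) * Polynomial.X ^ (m 0)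
    with hpdef
  have hpe : ∀ s : ℂ, p.eval s = eval (fun i : Fin 2 => if i = 0 then s else 1) F := by
    intro s
    rw [hpdef, Polynomial.eval_finset_sum, eval_eq']
    apply Finset.sum_congr rfl
    intro m hm
    rw [Polynomial.eval_mul, Polynomial.eval_C, Polynomial.eval_pow, Polynomial.eval_X,
      Fin.prod_univ_two]
    norm_num
  have hscaleF : ∀ s t : ℂ, t ≠ 0 →
      eval (fun i : Fin 2 => if i = 0 then s else t) F = t ^ d * p.eval (s / t) := by
    intro s t ht
    have hv : (fun i : Fin 2 => if i = 0 then s else t)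
        = (fun i : Fin 2 => t * (if i = 0 then s / t else 1)) := by
      funext i
      fin_cases i
      · simp; field_simp
      · simp
    rw [hv, homog_eval_scale hF, hpe]
  have hp0 : p ≠ 0 := by
    intro hp
    apply hF0
    have hXF : (X 1 : MvPolynomial (Fin 2) ℂ) * F = 0 := by
      apply myfunext
      intro s t
      rw [map_mul, map_zero]
      have hX1 : eval (fun i : Fin 2 => if i = 0 then s else t) (X 1 : MvPolynomial (Fin 2) ℂ)
          = t := by simp
      rw [hX1]
      by_cases ht : t = 0
      · rw [ht, zero_mul]
      · rw [hscaleF s t ht, hp, Polynomial.eval_zero, mul_zero, mul_zero]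
    rcases mul_eq_zero.mp hXF with h | h
    · exact absurd h (X_ne_zero 1)
    · exact h
  have hk : p.natDegree ≤ d := by
    apply Polynomial.natDegree_sum_le_of_forall_le
    intro m hm
    refine le_trans (Polynomial.natDegree_C_mul_le _ _) ?_
    rw [Polynomial.natDegree_X_pow]
    have := mdeg m hm
    omega
  set u := p.leadingCoeff with hu
  have hu0 : u ≠ 0 := Polynomial.leadingCoeff_ne_zero.mpr hp0
  set rs := p.roots with hrs
  have hcard : rs.card = p.natDegree :=
    Polynomial.splits_iff_card_roots.mp (IsAlgClosed.splits p)
  have hfact : p = Polynomial.C u * (rs.map (fun r => Polynomial.X - Polynomial.C r)).prod :=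
    (IsAlgClosed.splits p).eq_prod_roots
  refine ⟨u, rs, hu0, by omega, ?_⟩
  have hcancel : (X 1 : MvPolynomial (Fin 2) ℂ) * F =
      (X 1 : MvPolynomial (Fin 2) ℂ) *
        (C u * (rs.map (fun r => lin (1, -r))).prod * lin (0,1) ^ (d - rs.card)) := by
    apply myfunext
    intro s t
    have hX1 : eval (fun i : Fin 2 => if i = 0 then s else t) (X 1 : MvPolynomial (Fin 2) ℂ)
        = t := by simp
    have hprodeval : eval (fun i : Fin 2 => if i = 0 then s else t)
        ((rs.map (fun r => lin (1, -r))).prod)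
        = (rs.map (fun r => s - r * t)).prod := by
      rw [map_multiset_prod, Multiset.map_map]
      congr 1
      apply Multiset.map_congr rfl
      intro r _
      rw [Function.comp_apply, eval_lin']
      ring
    have hlin01 : eval (fun i : Fin 2 => if i = 0 then s else t) (lin (0,1)) = t := by
      rw [eval_lin']; ring
    simp only [map_mul, map_pow, eval_C, hX1, hprodeval, hlin01]
    by_cases ht : t = 0
    · rw [ht, zero_mul, zero_mul]
    · rw [hscaleF s t ht]
      have h2 : p.eval (s / t) = u * (rs.map (fun r => s/t - r)).prod := by
        conv_lhs => rw [hfact]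
        rw [Polynomial.eval_mul, Polynomial.eval_C, Polynomial.eval_multiset_prod,
          Multiset.map_map]
        congr 2
        apply Multiset.map_congr rfl
        intro r _
        simp
      have h3 : (rs.map (fun r => s - r * t)).prod
          = t ^ rs.card * (rs.map (fun r => s/t - r)).prod := by
        rw [Multiset.map_congr rfl (fun r _ => show s - r * t = t * (s/t - r) by
          field_simp)]
        rw [show (rs.map (fun r => t * (s/t - r))) =
          (rs.map (fun r => t * ((fun x => s/t - x) r))) from rfl]
        rw [Multiset.prod_map_mul (m := rs) (f := fun _ => t) (g := fun x => s/t - x)]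
        rw [Multiset.map_const', Multiset.prod_replicate]
      rw [h2, h3, hcard]
      rw [← pow_sub_mul_pow t hk]
      ring
  exact mul_left_cancel₀ (X_ne_zero 1) hcancel

end FACTOR

noncomputable def waringRank (d : ℕ) (F : MvPolynomial (Fin 2) ℂ) : ℕ :=
  sInf {r | ∃ (a : Fin r → ℂ) (c : Fin r → ℂ × ℂ), F = ∑ i, C (a i) * lin (c i) ^ d}

section TWOCLASS
open MvPolynomial Finset

lemma lin_10 : lin (1,0) = X 0 := by simp [lin]
lemma lin_01 : lin (0,1) = X 1 := by simp [lin]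

lemma pure_power (d : ℕ) (hd : 0 < d) (u : ℂ) (g : ℂ × ℂ) :
    ∃ c : ℂ × ℂ, C u * lin g ^ d = lin c ^ d := by
  obtain ⟨v, hv⟩ := IsAlgClosed.exists_pow_nat_eq u hd
  refine ⟨(v * g.1, v * g.2), ?_⟩
  have h : lin (v * g.1, v * g.2) = C v * lin g := by
    simp only [lin, map_mul]; ring
  rw [h, mul_pow, ← C_pow, hv]

lemma two_class_contra (d : ℕ) (F : MvPolynomial (Fin 2) ℂ)
    (hrk : waringRank d F ≤ (d + 1) / 2)
    (u : ℂ) (hu : u ≠ 0) (g1 g2 : ℂ × ℂ)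
    (hnp : g1.1 * g2.2 - g1.2 * g2.1 ≠ 0)
    (a b : ℕ) (hab : a + b = d) (hb : 1 ≤ b) (hba : b ≤ a)
    (hFeq : F = C u * lin g1 ^ a * lin g2 ^ b) : False := by
  classical
  have hd : 0 < d := by omega
  -- the decomposition set is nonempty
  have hne : {r | ∃ (α : Fin r → ℂ) (c : Fin r → ℂ × ℂ),
      F = ∑ i, C (α i) * lin (c i) ^ d}.Nonempty := by
    obtain ⟨α, γ, hαγ⟩ := waring_decomp d a b hab hd u g1 g2
    exact ⟨d + 1, α, γ, by rw [hFeq, hαγ]⟩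
  have hmem := Nat.sInf_mem hne
  set r := waringRank d F with hr
  have hmem' : ∃ (α : Fin r → ℂ) (c : Fin r → ℂ × ℂ),
      F = ∑ i, C (α i) * lin (c i) ^ d := hmem
  obtain ⟨α, γ, hdecomp⟩ := hmem'
  -- change of coordinates
  set Δ := g1.1 * g2.2 - g1.2 * g2.1 with hΔ
  set h1 : ℂ × ℂ := (g2.2 / Δ, -g1.2 / Δ) with hh1
  set h2 : ℂ × ℂ := (-g2.1 / Δ, g1.1 / Δ) with hh2
  set φ : MvPolynomial (Fin 2) ℂ →ₐ[ℂ] MvPolynomial (Fin 2) ℂ :=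
    aeval (fun i : Fin 2 => if i = 0 then lin h1 else lin h2) with hφ
  have phi_lin : ∀ c : ℂ × ℂ,
      φ (lin c) = lin (c.1 * h1.1 + c.2 * h2.1, c.1 * h1.2 + c.2 * h2.2) := by
    intro c
    simp only [hφ, lin, map_add, map_mul, aeval_X, aeval_C, algebraMap_eq]
    norm_num
    ring
  have hg1 : φ (lin g1) = X 0 := by
    rw [phi_lin]
    have e1 : g1.1 * h1.1 + g1.2 * h2.1 = 1 := by
      rw [hh1, hh2]; field_simp; ring
    have e2 : g1.1 * h1.2 + g1.2 * h2.2 = 0 := by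
      rw [hh1, hh2]; field_simp; ring
    rw [e1, e2, lin_10]
  have hg2 : φ (lin g2) = X 1 := by
    rw [phi_lin]
    have e1 : g2.1 * h1.1 + g2.2 * h2.1 = 0 := by
      rw [hh1, hh2]; field_simp; ring
    have e2 : g2.1 * h1.2 + g2.2 * h2.2 = 1 := by
      rw [hh1, hh2]; field_simp; ring
    rw [e1, e2, lin_01]
  -- transformed equation
  set δ : Fin r → ℂ × ℂ := fun i =>
    ((γ i).1 * h1.1 + (γ i).2 * h2.1, (γ i).1 * h1.2 + (γ i).2 * h2.2) with hδ
  have hkey : C u * (X 0 : MvPolynomial (Fin 2) ℂ) ^ a * (X 1 : MvPolynomial (Fin 2) ℂ) ^ b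
      = ∑ i, C (α i) * lin (δ i) ^ d := by
    have hC : ∀ x : ℂ, φ (C x) = C x := by
      intro x
      rw [hφ, aeval_C, algebraMap_eq]
    have hL : φ F = C u * (X 0 : MvPolynomial (Fin 2) ℂ) ^ a * X 1 ^ b := by
      rw [hFeq, map_mul, map_mul, map_pow, map_pow, hg1, hg2, hC]
    have hR : φ F = ∑ i, C (α i) * lin (δ i) ^ d := by
      rw [hdecomp, map_sum]
      apply Finset.sum_congr rfl
      intro i _
      rw [map_mul, map_pow, phi_lin, hC]
    rw [← hL, hR]
  -- coefficient extraction
  have hcoeff : ∀ x y : ℕ, x + y = d →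
      (if a = x ∧ b = y then u else 0)
      = (d.choose x : ℂ) * ∑ i, α i * (δ i).1 ^ x * (δ i).2 ^ y := by
    intro x y hxy
    have hL := congrArg (coeff (Finsupp.single 0 x + Finsupp.single 1 y)) hkey
    rw [coeff_term u a b x y] at hL
    rw [show coeff (Finsupp.single 0 x + Finsupp.single 1 y) (∑ i, C (α i) * lin (δ i) ^ d)
        = ∑ i, coeff (Finsupp.single 0 x + Finsupp.single 1 y) (C (α i) * lin (δ i) ^ d) from
      map_sum (coeffAddMonoidHom _) _ _] at hL
    rw [Finset.sum_congr rfl (fun i _ => by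
      rw [coeff_C_mul, coeff_lin_pow (δ i) d x y hxy])] at hL
    rw [hL, Finset.mul_sum]
    apply Finset.sum_congr rfl
    intro i _
    ring
  -- apply the scalar contradiction
  have hch : ∀ x : ℕ, x ≤ d → (d.choose x : ℂ) ≠ 0 :=
    fun x hx => Nat.cast_ne_zero.mpr (Nat.choose_pos hx).ne'
  refine SC (d := d) (r := r) (b := b) hb (by omega) α (fun i => (δ i).1) (fun i => (δ i).2)
    ?_ ?_
  · intro x y hxy hyb
    have h := hcoeff x y hxy
    rw [if_neg (fun hc => hyb hc.2.symm)] at h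
    rcases mul_eq_zero.mp h.symm with h' | h'
    · exact absurd h' (hch x (by omega))
    · exact h'
  · intro hzero
    have h := hcoeff a b hab
    rw [if_pos ⟨rfl, rfl⟩] at h
    have hda : d - b = a := by omega
    rw [hda] at hzero
    rw [hzero, mul_zero] at h
    exact hu h

end TWOCLASS

theorem low_rank_three_distinct_roots (d : ℕ) (hd : 3 ≤ d) (F : MvPolynomial (Fin 2) ℂ)
    (hF : F.IsHomogeneous d) (hrk : waringRank d F ≤ (d + 1) / 2)
    (hpow : ¬ ∃ c : ℂ × ℂ, F = lin c ^ d) :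
    ∃ l₁ l₂ l₃ : ℂ × ℂ,
      (l₁.1 * l₂.2 ≠ l₁.2 * l₂.1) ∧ (l₂.1 * l₃.2 ≠ l₂.2 * l₃.1) ∧
      (l₁.1 * l₃.2 ≠ l₁.2 * l₃.1) ∧
      lin l₁ ∣ F ∧ lin l₂ ∣ F ∧ lin l₃ ∣ F := by
  classical
  have hd0 : 0 < d := by omega
  have hF0 : F ≠ 0 := by
    intro h0
    have hl0 : lin ((0:ℂ), (0:ℂ)) = 0 := by simp [lin]
    exact hpow ⟨(0,0), by rw [h0, hl0, zero_pow (by omega)]⟩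
  obtain ⟨u, rs, hu0, hcard, hFeq⟩ := binary_factor hd0 hF hF0
  set k := Multiset.card rs with hk
  have hdvdr : ∀ r ∈ rs, lin (1, -r) ∣ F := by
    intro r hr
    rw [hFeq]
    exact dvd_mul_of_dvd_left
      (dvd_mul_of_dvd_right (Multiset.dvd_prod (Multiset.mem_map_of_mem _ hr)) _) _
  have hdvd01 : k < d → lin ((0:ℂ),(1:ℂ)) ∣ F := by
    intro hkd
    rw [hFeq]
    exact dvd_mul_of_dvd_right (dvd_pow_self _ (by omega)) _
  have nprr : ∀ x y : ℂ, x ≠ y → (1:ℂ) * -y ≠ -x * 1 := by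
    intro x y hxy h
    rw [one_mul, mul_one] at h
    exact hxy (neg_inj.mp h).symm
  have npr0 : ∀ x : ℂ, (1:ℂ) * 1 ≠ -x * 0 := by intro x; simp
  set S := rs.toFinset with hS
  by_cases h3 : 2 < S.card
  · obtain ⟨r1, r2, r3, hr1, hr2, hr3, h12, h13, h23⟩ := Finset.two_lt_card_iff.mp h3
    exact ⟨(1,-r1), (1,-r2), (1,-r3), nprr r1 r2 h12, nprr r2 r3 h23, nprr r1 r3 h13,
      hdvdr r1 (Multiset.mem_toFinset.mp hr1), hdvdr r2 (Multiset.mem_toFinset.mp hr2),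
      hdvdr r3 (Multiset.mem_toFinset.mp hr3)⟩
  · push_neg at h3
    by_cases h2 : 2 ≤ S.card
    · obtain ⟨r1, r2, hr1, hr2, h12⟩ := Finset.one_lt_card_iff.mp (show 1 < S.card by omega)
      by_cases hkd : k < d
      · exact ⟨(1,-r1), (1,-r2), (0,1), nprr r1 r2 h12, npr0 r2, npr0 r1,
          hdvdr r1 (Multiset.mem_toFinset.mp hr1), hdvdr r2 (Multiset.mem_toFinset.mp hr2),
          hdvd01 hkd⟩
      · exfalso
        have hkdeq : k = d := by omega
        have hS12 : S = {r1, r2} := by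
          have hsub : ({r1, r2} : Finset ℂ) ⊆ S := by
            intro x hx
            rcases Finset.mem_insert.mp hx with h | h
            · rwa [h]
            · rw [Finset.mem_singleton.mp h]; exact hr2
          have hc2' : ({r1, r2} : Finset ℂ).card = 2 := by
            rw [Finset.card_insert_of_notMem (by simpa using h12), Finset.card_singleton]
          exact (Finset.eq_of_subset_of_card_le hsub (by omega)).symm
        set c1 := rs.count r1 with hc1def
        have hc1 : 0 < c1 := Multiset.count_pos.mpr (Multiset.mem_toFinset.mp hr1)
        have hsplit := Multiset.filter_add_not (fun x => x = r1) rs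
        have hf1 : rs.filter (fun x => x = r1) = Multiset.replicate c1 r1 :=
          Multiset.filter_eq' rs r1
        set t := rs.filter (fun x => ¬ x = r1) with htdef
        have ht2 : ∀ x ∈ t, x = r2 := by
          intro x hx
          obtain ⟨hxrs, hxne⟩ := Multiset.mem_filter.mp hx
          have : x ∈ S := Multiset.mem_toFinset.mpr hxrs
          rw [hS12] at this
          rcases Finset.mem_insert.mp this with h | h
          · exact absurd h hxne
          · exact Finset.mem_singleton.mp h
        have hcardt : Multiset.card t = k - c1 := by
          have := congrArg Multiset.card hsplit
          rw [Multiset.card_add, hf1, Multiset.card_replicate] at this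
          omega
        have hc2 : 0 < k - c1 := by
          rw [← hcardt]
          apply Multiset.card_pos_iff_exists_mem.mpr
          exact ⟨r2, Multiset.mem_filter.mpr ⟨Multiset.mem_toFinset.mp hr2,
            fun h => h12 h.symm⟩⟩
        have hrs_split : rs = Multiset.replicate c1 r1 + Multiset.replicate (k - c1) r2 := by
          rw [← hsplit, hf1]
          congr 1
          rw [← hcardt]
          exact Multiset.eq_replicate_card.mpr ht2
        have hFform : F = C u * lin (1,-r1) ^ c1 * lin (1,-r2) ^ (k - c1) := by
          rw [hFeq, hrs_split, Multiset.map_add, Multiset.prod_add, Multiset.map_replicate,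
            Multiset.map_replicate, Multiset.prod_replicate, Multiset.prod_replicate]
          rw [show d - k = 0 by omega, pow_zero, mul_one]
          ring
        have hsum : c1 + (k - c1) = d := by omega
        rcases le_total (k - c1) c1 with hle | hle
        · exact two_class_contra d F hrk u hu0 (1,-r1) (1,-r2)
            (sub_ne_zero_of_ne (nprr r1 r2 h12)) c1 (k - c1) hsum hc2 hle hFform
        · refine two_class_contra d F hrk u hu0 (1,-r2) (1,-r1)
            (sub_ne_zero_of_ne (nprr r2 r1 (Ne.symm h12))) (k - c1) c1 (by omega) hc1 hle ?_
          rw [hFform]; ring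
    · -- S.card ≤ 1
      exfalso
      by_cases hS0 : S.card = 0
      · have hrs0 : rs = 0 := by
          have := Finset.card_eq_zero.mp hS0
          exact Multiset.toFinset_eq_empty.mp this
        have hk0 : k = 0 := by rw [hk, hrs0]; simp
        have hFform : F = C u * lin ((0:ℂ),(1:ℂ)) ^ d := by
          rw [hFeq, hrs0, hk0]
          simp
        obtain ⟨c, hc⟩ := pure_power d hd0 u (0,1)
        exact hpow ⟨c, by rw [hFform, ← hc]⟩
      · have hS1 : S.card = 1 := by omega
        obtain ⟨r1, hr1S⟩ := Finset.card_eq_one.mp hS1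
        have hall : ∀ x ∈ rs, x = r1 := by
          intro x hx
          have : x ∈ S := Multiset.mem_toFinset.mpr hx
          rw [hr1S] at this
          exact Finset.mem_singleton.mp this
        have hrep : rs = Multiset.replicate k r1 := Multiset.eq_replicate_card.mpr hall
        have hk1 : 1 ≤ k := by
          have : r1 ∈ S := by rw [hr1S]; exact Finset.mem_singleton_self r1
          have : r1 ∈ rs := Multiset.mem_toFinset.mp this
          exact Multiset.card_pos_iff_exists_mem.mpr ⟨r1, this⟩
        have hFform : F = C u * lin (1,-r1) ^ k * lin ((0:ℂ),(1:ℂ)) ^ (d - k) := by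
          rw [hFeq, hrep, Multiset.map_replicate, Multiset.prod_replicate]
        rcases eq_or_lt_of_le hcard with hkd | hkd
        · have hFform' : F = C u * lin (1,-r1) ^ d := by
            rw [hFform, hkd, Nat.sub_self, pow_zero, mul_one]
          obtain ⟨c, hc⟩ := pure_power d hd0 u (1,-r1)
          exact hpow ⟨c, by rw [hFform', ← hc]⟩
        · have hnp1 : ((1:ℂ),-r1).1 * ((0:ℂ),(1:ℂ)).2 - ((1:ℂ),-r1).2 * ((0:ℂ),(1:ℂ)).1 ≠ 0 := by
            simp
          rcases le_total (d - k) k with hle | hle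
          · exact two_class_contra d F hrk u hu0 (1,-r1) (0,1) hnp1 k (d - k)
              (by omega) (by omega) hle hFform
          · refine two_class_contra d F hrk u hu0 (0,1) (1,-r1)
              (by simp) (d - k) k (by omega) hk1 hle ?_
            rw [hFform]; ring
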